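/- Let s and t be multisets of positive natural numbers. If ∏_{a ∈ s}(1 − X^a) = ∏_{b ∈ t}(1 − X^b) in the polynomial ring ℤ[X], then s = t. -/
import Mathlib


open Polynomial

private lemma coeff_zero_prod (s : Multiset ℕ) (hs : ∀ a ∈ s, 0 < a) :
    ((s.map (fun a => 1 - (X : ℤ[X]) ^ a)).prod).coeff 0 = 1 := by
  induction s using Multiset.induction_on with
  | empty => simp
  | cons a s ih =>
    simp only [Multiset.map_cons, Multiset.prod_cons, Polynomial.mul_coeff_zero]
    rw [ih (fun b hb => hs b (Multiset.mem_cons_of_mem hb))]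
    have ha : a ≠ 0 := (hs a (Multiset.mem_cons_self a s)).ne'
    simp [coeff_X_pow, Ne.symm ha]

private lemma coeff_m_prod (s : Multiset ℕ) (m : ℕ) (hm : 0 < m)
    (hs : ∀ a ∈ s, m ≤ a) :
    ((s.map (fun a => 1 - (X : ℤ[X]) ^ a)).prod).coeff m = -(s.count m : ℤ) := by
  induction s using Multiset.induction_on with
  | empty => simp [coeff_one, hm.ne']
  | cons a s ih =>
    have ham : m ≤ a := hs a (Multiset.mem_cons_self a s)
    have hs' : ∀ b ∈ s, m ≤ b := fun b hb => hs b (Multiset.mem_cons_of_mem hb)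
    simp only [Multiset.map_cons, Multiset.prod_cons]
    rw [sub_mul, one_mul, coeff_sub, ih hs', mul_comm ((X : ℤ[X]) ^ a),
      coeff_mul_X_pow']
    rcases eq_or_lt_of_le ham with rfl | hlt
    · have h0 : ∀ b ∈ s, 0 < b := fun b hb => lt_of_lt_of_le hm (hs' b hb)
      rw [if_pos le_rfl, Nat.sub_self, coeff_zero_prod s h0,
        Multiset.count_cons_self]
      push_cast; ring
    · rw [if_neg (not_le.mpr hlt), Multiset.count_cons_of_ne (ne_of_lt hlt)]
      ring

/-- If ∏_{a ∈ s}(1 − X^a) = ∏_{b ∈ t}(1 − X^b) in ℤ[X], with s, t multisets of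
positive natural numbers, then s = t. -/
theorem stmt_5 (s t : Multiset ℕ)
    (hs : ∀ a ∈ s, 0 < a) (ht : ∀ b ∈ t, 0 < b)
    (h : (s.map (fun a => 1 - (X : ℤ[X]) ^ a)).prod =
         (t.map (fun b => 1 - (X : ℤ[X]) ^ b)).prod) :
    s = t := by
  induction s using Multiset.strongInductionOn generalizing t with
  | ih s IH =>
  by_cases hs0 : s = 0
  · subst hs0
    simp only [Multiset.map_zero, Multiset.prod_zero] at h
    by_contra ht0
    obtain ⟨b, hb⟩ := Multiset.exists_mem_of_ne_zero (Ne.symm ht0)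
    have hdvd := Multiset.dvd_prod (Multiset.mem_map_of_mem (fun a => 1 - (X : ℤ[X]) ^ a) hb)
    rw [← h] at hdvd
    have hu := isUnit_of_dvd_one hdvd
    have hdeg := Polynomial.natDegree_eq_zero_of_isUnit hu
    have hnd : (1 - (X : ℤ[X]) ^ b).natDegree = b := by
      rw [show (1 - (X : ℤ[X]) ^ b) = -(X ^ b - C 1) by rw [Polynomial.C_1]; ring,
        natDegree_neg, natDegree_X_pow_sub_C]
    rw [hnd] at hdeg
    exact (ht b hb).ne' hdeg
  · obtain ⟨m, hm0, hms, hmt⟩ : ∃ m, 0 < m ∧ m ∈ s ∧ m ∈ t := by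
      have hne : (s + t).toFinset.Nonempty := by
        obtain ⟨x, hx⟩ := Multiset.exists_mem_of_ne_zero hs0
        exact ⟨x, Multiset.mem_toFinset.mpr (Multiset.mem_add.mpr (Or.inl hx))⟩
      set m := (s + t).toFinset.min' hne with hmdef
      have hmmem : m ∈ s + t := Multiset.mem_toFinset.mp ((s + t).toFinset.min'_mem hne)
      have hmle : ∀ a ∈ s + t, m ≤ a := fun a ha =>
        Finset.min'_le _ a (Multiset.mem_toFinset.mpr ha)
      have hm0 : 0 < m := by
        rcases Multiset.mem_add.mp hmmem with h' | h'
        exacts [hs m h', ht m h']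
      have hcs := coeff_m_prod s m hm0 (fun a ha => hmle a (Multiset.mem_add.mpr (Or.inl ha)))
      have hct := coeff_m_prod t m hm0 (fun a ha => hmle a (Multiset.mem_add.mpr (Or.inr ha)))
      have hcount : s.count m = t.count m := by
        have h2 := congrArg (fun p => p.coeff m) h
        simp only at h2
        rw [hcs, hct] at h2
        exact_mod_cast neg_injective h2
      have hmsmem : m ∈ s := by
        rcases Multiset.mem_add.mp hmmem with h' | h'
        · exact h'
        · rw [← Multiset.count_pos, hcount, Multiset.count_pos]; exact h'
      have hmtmem : m ∈ t := by
        rw [← Multiset.count_pos, ← hcount, Multiset.count_pos]; exact hmsmem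
      exact ⟨m, hm0, hmsmem, hmtmem⟩
    obtain ⟨s', rfl⟩ := Multiset.exists_cons_of_mem hms
    obtain ⟨t', rfl⟩ := Multiset.exists_cons_of_mem hmt
    simp only [Multiset.map_cons, Multiset.prod_cons] at h
    have hne0 : (1 - (X : ℤ[X]) ^ m) ≠ 0 := by
      intro hc
      have h2 := congrArg (fun p => p.coeff 0) hc
      simp [coeff_X_pow, hm0.ne] at h2
    have h' := mul_left_cancel₀ hne0 h
    have hst : s' = t' :=
      IH s' (Multiset.lt_cons_self s' m) t'
        (fun a ha => hs a (Multiset.mem_cons_of_mem ha))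
        (fun b hb => ht b (Multiset.mem_cons_of_mem hb)) h'
    rw [hst]
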